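/- Let n ≥ 1, p ∈ [0,1], and let (Ω, μ) be a probability space carrying complex random variables R_{ij} for all pairs i ≠ j in Fin n, which are independent, square-integrable, have mean 0, and satisfy E|R_{ij}|² = 1 − p²; set R_{ii} = 0. Let z ∈ ℂⁿ be a fixed (deterministic) vector with |z_j| = 1/√n for every j. Then E[ ‖R z‖² − |zᴴ R z|² ] = (1 − p²)(n − 1)²/n, and hence E[ ‖R z‖² − |zᴴ R z|² ] / (n p)² = (n − 1)²(1 − p²)/(n³ p²) whenever p > 0. -/

import Mathlib

open MeasureTheory ProbabilityTheory ComplexConjugate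

section Aux

variable {Ω : Type*} [MeasurableSpace Ω] {μ : Measure Ω}

lemma aux_integral_complex_ofReal {f : Ω → ℝ} :
    ∫ ω, ((f ω : ℝ) : ℂ) ∂μ = ((∫ ω, f ω ∂μ : ℝ) : ℂ) := integral_ofReal

lemma aux_integral_complex_re {f : Ω → ℂ} (hf : Integrable f μ) :
    ∫ ω, (f ω).re ∂μ = (∫ ω, f ω ∂μ).re := integral_re hf

lemma aux_memL2_conj {f : Ω → ℂ} (hf : MemLp f 2 μ) :
    MemLp (fun ω => conj (f ω)) 2 μ := by
  refine ⟨Complex.continuous_conj.comp_aestronglyMeasurable hf.1, ?_⟩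
  have : eLpNorm (fun ω => conj (f ω)) 2 μ = eLpNorm f 2 μ := by
    rw [← eLpNorm_norm (fun ω => conj (f ω)), ← eLpNorm_norm f]
    simp
  rw [this]; exact hf.2

lemma aux_integrable_mul {f g : Ω → ℂ} (hf : MemLp f 2 μ) (hg : MemLp g 2 μ) :
    Integrable (fun ω => f ω * g ω) μ := by
  have h : MemLp (f • g) 1 μ := hg.smul hf
  exact (memLp_one_iff_integrable.mp (by simpa [Pi.smul_apply, smul_eq_mul] using h) :
    Integrable (f * g) μ)

lemma aux_indep_integral_mul [IsProbabilityMeasure μ] {X Y : Ω → ℂ}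
    (h : IndepFun X Y μ) (hX : Integrable X μ) (hY : Integrable Y μ) :
    ∫ ω, X ω * Y ω ∂μ = (∫ ω, X ω ∂μ) * ∫ ω, Y ω ∂μ := by
  have hX1 : Integrable (fun ω => (X ω).re) μ := hX.re
  have hX2 : Integrable (fun ω => (X ω).im) μ := hX.im
  have hY1 : Integrable (fun ω => (Y ω).re) μ := hY.re
  have hY2 : Integrable (fun ω => (Y ω).im) μ := hY.im
  have h11 : IndepFun (fun ω => (X ω).re) (fun ω => (Y ω).re) μ :=
    h.comp Complex.measurable_re Complex.measurable_re
  have h12 : IndepFun (fun ω => (X ω).re) (fun ω => (Y ω).im) μ :=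
    h.comp Complex.measurable_re Complex.measurable_im
  have h21 : IndepFun (fun ω => (X ω).im) (fun ω => (Y ω).re) μ :=
    h.comp Complex.measurable_im Complex.measurable_re
  have h22 : IndepFun (fun ω => (X ω).im) (fun ω => (Y ω).im) μ :=
    h.comp Complex.measurable_im Complex.measurable_im
  have i11 : Integrable (fun ω => (X ω).re * (Y ω).re) μ := h11.integrable_mul hX1 hY1
  have i12 : Integrable (fun ω => (X ω).re * (Y ω).im) μ := h12.integrable_mul hX1 hY2
  have i21 : Integrable (fun ω => (X ω).im * (Y ω).re) μ := h21.integrable_mul hX2 hY1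
  have i22 : Integrable (fun ω => (X ω).im * (Y ω).im) μ := h22.integrable_mul hX2 hY2
  have e11 : ∫ ω, (X ω).re * (Y ω).re ∂μ = (∫ ω, (X ω).re ∂μ) * ∫ ω, (Y ω).re ∂μ :=
    h11.integral_fun_mul_eq_mul_integral hX1.1 hY1.1
  have e12 : ∫ ω, (X ω).re * (Y ω).im ∂μ = (∫ ω, (X ω).re ∂μ) * ∫ ω, (Y ω).im ∂μ :=
    h12.integral_fun_mul_eq_mul_integral hX1.1 hY2.1
  have e21 : ∫ ω, (X ω).im * (Y ω).re ∂μ = (∫ ω, (X ω).im ∂μ) * ∫ ω, (Y ω).re ∂μ :=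
    h21.integral_fun_mul_eq_mul_integral hX2.1 hY1.1
  have e22 : ∫ ω, (X ω).im * (Y ω).im ∂μ = (∫ ω, (X ω).im ∂μ) * ∫ ω, (Y ω).im ∂μ :=
    h22.integral_fun_mul_eq_mul_integral hX2.1 hY2.1
  have hpt : ∀ ω, X ω * Y ω
      = (((X ω).re * (Y ω).re - (X ω).im * (Y ω).im : ℝ) : ℂ)
        + (((X ω).re * (Y ω).im + (X ω).im * (Y ω).re : ℝ) : ℂ) * Complex.I := by
    intro ω
    apply Complex.ext <;> simp [Complex.mul_re, Complex.mul_im]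
  calc ∫ ω, X ω * Y ω ∂μ
      = ∫ ω, ((((X ω).re * (Y ω).re - (X ω).im * (Y ω).im : ℝ) : ℂ)
        + (((X ω).re * (Y ω).im + (X ω).im * (Y ω).re : ℝ) : ℂ) * Complex.I) ∂μ := by
        exact integral_congr_ae (Filter.Eventually.of_forall hpt)
    _ = ((∫ ω, ((X ω).re * (Y ω).re - (X ω).im * (Y ω).im) ∂μ : ℝ) : ℂ)
        + ((∫ ω, ((X ω).re * (Y ω).im + (X ω).im * (Y ω).re) ∂μ : ℝ) : ℂ) * Complex.I := by
        have iA : Integrable (fun ω =>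
            (((X ω).re * (Y ω).re - (X ω).im * (Y ω).im : ℝ) : ℂ)) μ := (i11.sub i22).ofReal
        have iB : Integrable (fun ω =>
            (((X ω).re * (Y ω).im + (X ω).im * (Y ω).re : ℝ) : ℂ) * Complex.I) μ :=
          ((i12.add i21).ofReal).mul_const _
        rw [integral_add iA iB,
          integral_mul_const, aux_integral_complex_ofReal, aux_integral_complex_ofReal]
    _ = (∫ ω, X ω ∂μ) * ∫ ω, Y ω ∂μ := by
        rw [integral_sub i11 i22, integral_add i12 i21, e11, e12, e21, e22]
        have hx : ∫ ω, X ω ∂μ = ((∫ ω, (X ω).re ∂μ : ℝ) : ℂ)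
            + ((∫ ω, (X ω).im ∂μ : ℝ) : ℂ) * Complex.I := by
          apply Complex.ext
          · simpa using (integral_re hX).symm
          · simpa using (integral_im hX).symm
        have hy : ∫ ω, Y ω ∂μ = ((∫ ω, (Y ω).re ∂μ : ℝ) : ℂ)
            + ((∫ ω, (Y ω).im ∂μ : ℝ) : ℂ) * Complex.I := by
          apply Complex.ext
          · simpa using (integral_re hY).symm
          · simpa using (integral_im hY).symm
        rw [hx, hy]
        apply Complex.ext <;> simp <;> ring

lemma aux_second_moment [IsProbabilityMeasure μ]
    {ι : Type*} [Fintype ι] (f : ι → Ω → ℂ) (w : ι → ℂ) (c : ι → ℝ)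
    (hL2 : ∀ a, MemLp (f a) 2 μ)
    (horth : ∀ a b, a ≠ b → ∫ ω, f a ω * conj (f b ω) ∂μ = 0)
    (hc : ∀ a, ∫ ω, ‖f a ω‖ ^ 2 ∂μ = c a) :
    Integrable (fun ω => ‖∑ a, f a ω * w a‖ ^ 2) μ ∧
      ∫ ω, ‖∑ a, f a ω * w a‖ ^ 2 ∂μ = ∑ a, ‖w a‖ ^ 2 * c a := by
  classical
  set F : Ω → ℂ := fun ω => ∑ a, f a ω * w a with hFdef
  have hFa : ∀ a, MemLp (fun ω => f a ω * w a) 2 μ := by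
    intro a
    simpa [mul_comm] using (hL2 a).const_mul (w a)
  have hF : MemLp F 2 μ := by
    simpa using memLp_finset_sum (Finset.univ) (fun a _ => hFa a)
  have hint : Integrable (fun ω => ‖F ω‖ ^ 2) μ :=
    (memLp_two_iff_integrable_sq_norm hF.1).mp hF
  refine ⟨hint, ?_⟩
  have hterm_int : ∀ a b : ι,
      Integrable (fun ω => (f a ω * w a) * conj (f b ω * w b)) μ := by
    intro a b
    exact aux_integrable_mul (hFa a) (aux_memL2_conj (hFa b))
  have hG_int : Integrable (fun ω => ∑ a, ∑ b, (f a ω * w a) * conj (f b ω * w b)) μ := by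
    apply integrable_finset_sum
    intro a _
    exact integrable_finset_sum _ (fun b _ => hterm_int a b)
  have hpt : ∀ ω, (‖F ω‖ ^ 2 : ℝ)
      = (∑ a, ∑ b, (f a ω * w a) * conj (f b ω * w b)).re := by
    intro ω
    have : ∑ a, ∑ b, (f a ω * w a) * conj (f b ω * w b) = F ω * conj (F ω) := by
      rw [hFdef]
      rw [map_sum, Finset.sum_mul_sum]
    rw [this, Complex.mul_conj, Complex.normSq_eq_norm_sq, Complex.ofReal_re]
  have hterm_val : ∀ a b : ι, ∫ ω, (f a ω * w a) * conj (f b ω * w b) ∂μ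
      = if a = b then ((‖w a‖ ^ 2 * c a : ℝ) : ℂ) else 0 := by
    intro a b
    by_cases hab : a = b
    · subst hab
      simp only [if_pos rfl]
      have : ∀ ω, (f a ω * w a) * conj (f a ω * w a)
          = ((‖w a‖ ^ 2 : ℝ) : ℂ) * ((‖f a ω‖ ^ 2 : ℝ) : ℂ) := by
        intro ω
        have h1 : f a ω * conj (f a ω) = ((‖f a ω‖ ^ 2 : ℝ) : ℂ) := by
          rw [Complex.mul_conj, Complex.normSq_eq_norm_sq]
        have h2 : w a * conj (w a) = ((‖w a‖ ^ 2 : ℝ) : ℂ) := by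
          rw [Complex.mul_conj, Complex.normSq_eq_norm_sq]
        calc (f a ω * w a) * conj (f a ω * w a)
            = (w a * conj (w a)) * (f a ω * conj (f a ω)) := by rw [map_mul]; ring
          _ = ((‖w a‖ ^ 2 : ℝ) : ℂ) * ((‖f a ω‖ ^ 2 : ℝ) : ℂ) := by rw [h1, h2]
      rw [integral_congr_ae (Filter.Eventually.of_forall this), integral_const_mul,
        aux_integral_complex_ofReal, hc a]
      push_cast
      ring
    · simp only [if_neg hab]
      have : ∀ ω, (f a ω * w a) * conj (f b ω * w b)
          = (w a * conj (w b)) * (f a ω * conj (f b ω)) := by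
        intro ω; rw [map_mul]; ring
      rw [integral_congr_ae (Filter.Eventually.of_forall this), integral_const_mul,
        horth a b hab, mul_zero]
  calc ∫ ω, ‖F ω‖ ^ 2 ∂μ
      = ∫ ω, (∑ a, ∑ b, (f a ω * w a) * conj (f b ω * w b)).re ∂μ :=
        integral_congr_ae (Filter.Eventually.of_forall hpt)
    _ = (∫ ω, ∑ a, ∑ b, (f a ω * w a) * conj (f b ω * w b) ∂μ).re := by
        exact aux_integral_complex_re hG_int
    _ = (∑ a, ∑ b, ∫ ω, (f a ω * w a) * conj (f b ω * w b) ∂μ).re := by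
        rw [integral_finset_sum _ (fun a _ => integrable_finset_sum _ (fun b _ => hterm_int a b))]
        congr 1
        exact Finset.sum_congr rfl fun a _ =>
          integral_finset_sum _ (fun b _ => hterm_int a b)
    _ = ∑ a, ‖w a‖ ^ 2 * c a := by
        have : ∀ a : ι, ∑ b, ∫ ω, (f a ω * w a) * conj (f b ω * w b) ∂μ
            = ((‖w a‖ ^ 2 * c a : ℝ) : ℂ) := by
          intro a
          rw [Finset.sum_congr rfl (fun b _ => hterm_val a b)]
          simp
        rw [Finset.sum_congr rfl (fun a _ => this a)]
        rw [← Complex.ofReal_sum]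
        simp [← Complex.ofReal_pow]

end Aux

theorem expected_sq_tangent_leading_term
    (n : ℕ) (hn : 1 ≤ n) (p : ℝ) (hp : p ∈ Set.Icc (0 : ℝ) 1)
    {Ω : Type*} [MeasurableSpace Ω] (μ : Measure Ω) [IsProbabilityMeasure μ]
    (R : Fin n → Fin n → Ω → ℂ)
    (hindep : iIndepFun 
      (fun ij : Fin n × Fin n => R ij.1 ij.2) μ)
    (hL2 : ∀ i j, i ≠ j → MemLp (R i j) 2 μ)
    (hmean : ∀ i j, i ≠ j → ∫ ω, R i j ω ∂μ = 0)
    (hvar : ∀ i j, i ≠ j → ∫ ω, ‖R i j ω‖ ^ 2 ∂μ = 1 - p ^ 2)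
    (hdiag : ∀ i ω, R i i ω = 0)
    (z : Fin n → ℂ) (hz : ∀ j, ‖z j‖ = 1 / Real.sqrt n) :
    (∫ ω, (∑ i, ‖∑ j, R i j ω * z j‖ ^ 2
        - ‖∑ i, ∑ j, starRingEnd ℂ (z i) * R i j ω * z j‖ ^ 2) ∂μ)
      = (1 - p ^ 2) * ((n : ℝ) - 1) ^ 2 / n ∧
    (0 < p →
      (∫ ω, (∑ i, ‖∑ j, R i j ω * z j‖ ^ 2
          - ‖∑ i, ∑ j, starRingEnd ℂ (z i) * R i j ω * z j‖ ^ 2) ∂μ) / ((n : ℝ) * p) ^ 2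
        = ((n : ℝ) - 1) ^ 2 * (1 - p ^ 2) / ((n : ℝ) ^ 3 * p ^ 2)) := by
  classical
  have hn0 : (0 : ℝ) < n := by exact_mod_cast Nat.lt_of_lt_of_le Nat.zero_lt_one hn
  have hnne : (n : ℝ) ≠ 0 := ne_of_gt hn0
  have hzsq : ∀ j, ‖z j‖ ^ 2 = 1 / (n : ℝ) := by
    intro j
    rw [hz j, div_pow, one_pow, Real.sq_sqrt (Nat.cast_nonneg n)]
  have hL2' : ∀ i j, MemLp (R i j) 2 μ := by
    intro i j
    by_cases h : i = j
    · subst h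
      have : R i i = fun _ => (0 : ℂ) := funext (hdiag i)
      rw [this]
      exact memLp_const 0
    · exact hL2 i j h
  have hInt : ∀ i j, Integrable (R i j) μ := fun i j => (hL2' i j).integrable one_le_two
  -- orthogonality of distinct entries
  have horthP : ∀ a b : Fin n × Fin n, a ≠ b →
      ∫ ω, R a.1 a.2 ω * conj (R b.1 b.2 ω) ∂μ = 0 := by
    intro a b hab
    by_cases ha : a.1 = a.2
    · have hz' : ∀ ω, R a.1 a.2 ω * conj (R b.1 b.2 ω) = 0 := by
        intro ω
        have : R a.1 a.2 ω = 0 := by rw [ha]; exact hdiag _ ω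
        rw [this, zero_mul]
      rw [integral_congr_ae (Filter.Eventually.of_forall hz'), integral_zero]
    · by_cases hb : b.1 = b.2
      · have hz' : ∀ ω, R a.1 a.2 ω * conj (R b.1 b.2 ω) = 0 := by
          intro ω
          have : R b.1 b.2 ω = 0 := by rw [hb]; exact hdiag _ ω
          rw [this, map_zero, mul_zero]
        rw [integral_congr_ae (Filter.Eventually.of_forall hz'), integral_zero]
      · have hi : IndepFun (R a.1 a.2) (R b.1 b.2) μ := hindep.indepFun hab
        have hi' : IndepFun (R a.1 a.2) (fun ω => conj (R b.1 b.2 ω)) μ :=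
          hi.comp measurable_id Complex.continuous_conj.measurable
        have hIc : Integrable (fun ω => conj (R b.1 b.2 ω)) μ :=
          (aux_memL2_conj (hL2' b.1 b.2)).integrable one_le_two
        rw [aux_indep_integral_mul hi' (hInt a.1 a.2) hIc, hmean a.1 a.2 ha, zero_mul]
  have hvar' : ∀ a : Fin n × Fin n, ∫ ω, ‖R a.1 a.2 ω‖ ^ 2 ∂μ
      = if a.1 = a.2 then 0 else 1 - p ^ 2 := by
    intro a
    by_cases ha : a.1 = a.2
    · rw [if_pos ha]
      have hz' : ∀ ω, ‖R a.1 a.2 ω‖ ^ 2 = 0 := by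
        intro ω
        have : R a.1 a.2 ω = 0 := by rw [ha]; exact hdiag _ ω
        rw [this]; simp
      rw [integral_congr_ae (Filter.Eventually.of_forall hz'), integral_zero]
    · rw [if_neg ha]
      exact hvar a.1 a.2 ha
  -- rows
  have hrow : ∀ i : Fin n,
      Integrable (fun ω => ‖∑ j, R i j ω * z j‖ ^ 2) μ ∧
      ∫ ω, ‖∑ j, R i j ω * z j‖ ^ 2 ∂μ
        = ∑ j, ‖z j‖ ^ 2 * (if i = j then 0 else 1 - p ^ 2) := by
    intro i
    exact aux_second_moment (fun j => R i j) z (fun j => if i = j then 0 else 1 - p ^ 2)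
      (fun j => hL2' i j)
      (fun j k hjk => horthP (i, j) (i, k) (by simp [hjk]))
      (fun j => hvar' (i, j))
  have hrow_val : ∀ i : Fin n,
      ∫ ω, ‖∑ j, R i j ω * z j‖ ^ 2 ∂μ = ((n : ℝ) - 1) * (1 - p ^ 2) / n := by
    intro i
    rw [(hrow i).2]
    have hterm : ∀ j, ‖z j‖ ^ 2 * (if i = j then 0 else 1 - p ^ 2)
        = (1 - p ^ 2) / n - (if i = j then (1 - p ^ 2) / n else 0) := by
      intro j
      by_cases h : i = j
      · rw [if_pos h, if_pos h]; simp
      · rw [if_neg h, if_neg h, hzsq j]; ring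
    rw [Finset.sum_congr rfl (fun j _ => hterm j), Finset.sum_sub_distrib,
      Finset.sum_const, Finset.sum_ite_eq, if_pos (Finset.mem_univ i)]
    simp only [Finset.card_univ, Fintype.card_fin, nsmul_eq_mul]
    field_simp
  -- the quadratic-form term
  have hBpt : ∀ ω, (∑ i, ∑ j, conj (z i) * R i j ω * z j)
      = ∑ a : Fin n × Fin n, R a.1 a.2 ω * (conj (z a.1) * z a.2) := by
    intro ω
    rw [Fintype.sum_prod_type]
    exact Finset.sum_congr rfl fun i _ => Finset.sum_congr rfl fun j _ => by ring
  have hB := aux_second_moment (fun a : Fin n × Fin n => R a.1 a.2)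
      (fun a : Fin n × Fin n => conj (z a.1) * z a.2)
      (fun a : Fin n × Fin n => if a.1 = a.2 then 0 else 1 - p ^ 2)
      (fun a => hL2' a.1 a.2) horthP hvar'
  have hB1 : Integrable
      (fun ω => ‖∑ a : Fin n × Fin n, R a.1 a.2 ω * (conj (z a.1) * z a.2)‖ ^ 2) μ := hB.1
  have hB2 : ∫ ω, ‖∑ a : Fin n × Fin n, R a.1 a.2 ω * (conj (z a.1) * z a.2)‖ ^ 2 ∂μ
      = ∑ a : Fin n × Fin n, ‖conj (z a.1) * z a.2‖ ^ 2
        * (if a.1 = a.2 then 0 else 1 - p ^ 2) := hB.2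
  have hBint : Integrable (fun ω => ‖∑ i, ∑ j, conj (z i) * R i j ω * z j‖ ^ 2) μ := by
    refine hB1.congr (Filter.Eventually.of_forall fun ω => ?_)
    show _ = ‖∑ i, ∑ j, conj (z i) * R i j ω * z j‖ ^ 2
    rw [hBpt ω]
  have hBval : ∫ ω, ‖∑ i, ∑ j, conj (z i) * R i j ω * z j‖ ^ 2 ∂μ
      = ((n : ℝ) - 1) * (1 - p ^ 2) / n := by
    have heq : ∫ ω, ‖∑ i, ∑ j, conj (z i) * R i j ω * z j‖ ^ 2 ∂μ
        = ∫ ω, ‖∑ a : Fin n × Fin n, R a.1 a.2 ω * (conj (z a.1) * z a.2)‖ ^ 2 ∂μ := by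
      exact integral_congr_ae (Filter.Eventually.of_forall fun ω =>
        congrArg (fun x : ℂ => ‖x‖ ^ 2) (hBpt ω))
    rw [heq, hB2]
    have hwsq : ∀ a : Fin n × Fin n, ‖conj (z a.1) * z a.2‖ ^ 2 = 1 / (n : ℝ) ^ 2 := by
      intro a
      rw [norm_mul, mul_pow, RCLike.norm_conj, hzsq a.1, hzsq a.2]
      ring
    rw [Fintype.sum_prod_type]
    have hinner : ∀ i : Fin n,
        (∑ j, ‖conj (z i) * z j‖ ^ 2 * (if i = j then 0 else 1 - p ^ 2))
        = ((n : ℝ) - 1) * (1 - p ^ 2) / n ^ 2 := by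
      intro i
      have hterm : ∀ j, ‖conj (z i) * z j‖ ^ 2 * (if i = j then 0 else 1 - p ^ 2)
          = (1 - p ^ 2) / n ^ 2 - (if i = j then (1 - p ^ 2) / n ^ 2 else 0) := by
        intro j
        by_cases h : i = j
        · rw [if_pos h, if_pos h]; simp
        · rw [if_neg h, if_neg h, hwsq (i, j)]; ring
      rw [Finset.sum_congr rfl (fun j _ => hterm j), Finset.sum_sub_distrib,
        Finset.sum_const, Finset.sum_ite_eq, if_pos (Finset.mem_univ i)]
      simp only [Finset.card_univ, Fintype.card_fin, nsmul_eq_mul]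
      field_simp
    rw [Finset.sum_congr rfl (fun i _ => hinner i), Finset.sum_const]
    simp only [Finset.card_univ, Fintype.card_fin, nsmul_eq_mul]
    field_simp
  -- sum over rows
  have hSint : Integrable (fun ω => ∑ i, ‖∑ j, R i j ω * z j‖ ^ 2) μ :=
    integrable_finset_sum _ (fun i _ => (hrow i).1)
  have hSval : ∫ ω, (∑ i, ‖∑ j, R i j ω * z j‖ ^ 2) ∂μ
      = ((n : ℝ) - 1) * (1 - p ^ 2) := by
    rw [integral_finset_sum _ (fun i _ => (hrow i).1),
      Finset.sum_congr rfl (fun i _ => hrow_val i), Finset.sum_const]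
    simp only [Finset.card_univ, Fintype.card_fin, nsmul_eq_mul]
    field_simp
  have hmain : (∫ ω, (∑ i, ‖∑ j, R i j ω * z j‖ ^ 2
      - ‖∑ i, ∑ j, starRingEnd ℂ (z i) * R i j ω * z j‖ ^ 2) ∂μ)
      = (1 - p ^ 2) * ((n : ℝ) - 1) ^ 2 / n := by
    rw [integral_sub hSint hBint, hSval, hBval]
    field_simp
  refine ⟨hmain, fun hp0 => ?_⟩
  rw [hmain]
  have hpne : p ≠ 0 := ne_of_gt hp0
  field_simp
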